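/- For any infinite cardinal κ, the automorphism group of the compact topological group 𝕋^κ contains a countable subgroup H such that for every neighborhood U of zero, 𝕋^κ = ⋃_{h ∈ H} h(U). -/

import Mathlib

noncomputable section

local notation "TT" => AddCircle (1 : ℝ)

section Gadgets

variable {ι : Type*}

def permAut (π : Equiv.Perm ι) : AddAut (ι → TT) where
  toFun x := fun i => x (π i)
  invFun y := fun i => y (π.symm i)
  left_inv x := funext fun i => by simp
  right_inv y := funext fun i => by simp
  map_add' x y := rfl

lemma permAut_cont (π : Equiv.Perm ι) : Continuous ⇑(permAut π) :=
  continuous_pi fun i => continuous_apply (π i)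

lemma permAut_symm_cont (π : Equiv.Perm ι) : Continuous ⇑(permAut π).symm :=
  continuous_pi fun i => continuous_apply (π.symm i)

def shearAut (p : ι → Option ι) (hp : ∀ i j, p i = some j → p j = none) :
    AddAut (ι → TT) where
  toFun x := fun i => x i - (p i).elim 0 x
  invFun y := fun i => y i + (p i).elim 0 y
  left_inv x := funext fun i => by
    cases h : p i with
    | none => simp [h]
    | some j => simp [h, hp i j h]
  right_inv y := funext fun i => by
    cases h : p i with
    | none => simp [h]
    | some j => simp [h, hp i j h]
  map_add' x y := funext fun i => by
    cases h : p i with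
    | none => simp [h]
    | some j => simp [h]; abel

lemma shearAut_cont (p : ι → Option ι) (hp) : Continuous ⇑(shearAut p hp) := by
  show Continuous fun (x : ι → TT) (i : ι) => x i - (p i).elim 0 x
  refine continuous_pi fun i => ?_
  cases h : p i with
  | none =>
      simp only [h, Option.elim_none]
      exact (continuous_apply i).sub continuous_const
  | some j =>
      simp only [h, Option.elim_some]
      exact (continuous_apply i).sub (continuous_apply j)

lemma shearAut_symm_cont (p : ι → Option ι) (hp) : Continuous ⇑(shearAut p hp).symm := by
  show Continuous fun (x : ι → TT) (i : ι) => x i + (p i).elim 0 x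
  refine continuous_pi fun i => ?_
  cases h : p i with
  | none =>
      simp only [h, Option.elim_none]
      exact (continuous_apply i).add continuous_const
  | some j =>
      simp only [h, Option.elim_some]
      exact (continuous_apply i).add (continuous_apply j)

end Gadgets

/-- level involution: swaps `n < K` with `K + pair n s`. -/
def flev (K s : ℕ) (n : ℕ) : ℕ :=
  if n < K then K + Nat.pair n s
  else if K ≤ n ∧ (Nat.unpair (n - K)).2 = s ∧ (Nat.unpair (n - K)).1 < K then
    (Nat.unpair (n - K)).1
  else n

lemma flev_lt (K s n : ℕ) (hn : n < K) : flev K s n = K + Nat.pair n s := by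
  simp [flev, hn]

lemma flev_pair (K s n : ℕ) (hn : n < K) : flev K s (K + Nat.pair n s) = n := by
  have h1 : ¬ (K + Nat.pair n s < K) := by omega
  rw [flev, if_neg h1, if_pos]
  · simp [Nat.unpair_pair]
  · refine ⟨by omega, ?_, ?_⟩ <;> simp [Nat.unpair_pair, hn]

lemma flev_pair_ne (K s s' n : ℕ) (hs : s' ≠ s) :
    flev K s (K + Nat.pair n s') = K + Nat.pair n s' := by
  have h1 : ¬ (K + Nat.pair n s' < K) := by omega
  rw [flev, if_neg h1, if_neg]
  rintro ⟨-, h2, -⟩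
  simp [Nat.unpair_pair] at h2
  exact hs h2

lemma flev_invol (K s : ℕ) : Function.Involutive (flev K s) := by
  intro n
  rcases lt_or_ge n K with hn | hn
  · rw [flev_lt K s n hn, flev_pair K s n hn]
  · by_cases hc : K ≤ n ∧ (Nat.unpair (n - K)).2 = s ∧ (Nat.unpair (n - K)).1 < K
    · have h1 : flev K s n = (Nat.unpair (n - K)).1 := by
        rw [flev, if_neg (by omega), if_pos hc]
      have h2 : Nat.pair (Nat.unpair (n - K)).1 s = n - K := by
        conv_rhs => rw [← Nat.pair_unpair (n - K)]
        rw [hc.2.1]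
      rw [h1, flev_lt K s _ hc.2.2, h2]
      omega
    · have h1 : flev K s n = n := by rw [flev, if_neg (by omega), if_neg hc]
      rw [h1, h1]

def pperm {ι : Type*} (e : ι ≃ ι × ℕ) (K s : ℕ) : Equiv.Perm ι :=
  (e.trans (Equiv.prodCongr (Equiv.refl ι) (flev_invol K s).toPerm)).trans e.symm

lemma pperm_apply {ι : Type*} (e : ι ≃ ι × ℕ) (K s : ℕ) (i : ι) :
    pperm e K s i = e.symm ((e i).1, flev K s (e i).2) := rfl

def shp {ι : Type*} (e : ι ≃ ι × ℕ) (K s : ℕ) (i : ι) : Option ι :=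
  if (e i).2 < K then some (e.symm ((e i).1, K + Nat.pair (e i).2 s)) else none

lemma shp_nil {ι : Type*} (e : ι ≃ ι × ℕ) (K s : ℕ) :
    ∀ i j, shp e K s i = some j → shp e K s j = none := by
  intro i j hij
  rw [shp] at hij
  split at hij
  · cases hij
    rw [shp, if_neg]
    simp only [Equiv.apply_symm_apply]
    omega
  · cases hij

/-- the key computation -/
lemma key_comp {ι : Type*} (e : ι ≃ ι × ℕ) (K s s' : ℕ) (hss : s ≠ s') (z : ι → TT) (i : ι)
    (hi : (e i).2 < K) :
    (shearAut (shp e K s') (shp_nil e K s') + permAut (pperm e K s)) z i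
      = z (e.symm ((e i).1, K + Nat.pair (e i).2 s))
        - z (e.symm ((e i).1, K + Nat.pair (e i).2 s')) := by
  have hmul : (shearAut (shp e K s') (shp_nil e K s') + permAut (pperm e K s)) z
      = shearAut (shp e K s') (shp_nil e K s') (permAut (pperm e K s) z) := rfl
  rw [hmul]
  set y := permAut (pperm e K s) z with hy
  have hsh : shearAut (shp e K s') (shp_nil e K s') y i = y i - (shp e K s' i).elim 0 y := rfl
  have hshp : shp e K s' i = some (e.symm ((e i).1, K + Nat.pair (e i).2 s')) := by
    rw [shp, if_pos hi]
  rw [hsh, hshp]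
  simp only [Option.elim_some]
  have hyi : y i = z (e.symm ((e i).1, K + Nat.pair (e i).2 s)) := by
    have : y i = z (pperm e K s i) := rfl
    rw [this, pperm_apply, flev_lt K s _ hi]
  have hyaux : y (e.symm ((e i).1, K + Nat.pair (e i).2 s'))
      = z (e.symm ((e i).1, K + Nat.pair (e i).2 s')) := by
    have h0 : y (e.symm ((e i).1, K + Nat.pair (e i).2 s'))
        = z (pperm e K s (e.symm ((e i).1, K + Nat.pair (e i).2 s'))) := rfl
    rw [h0, pperm_apply]
    simp only [Equiv.apply_symm_apply]
    rw [flev_pair_ne K s s' _ (Ne.symm hss)]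
  rw [hyi, hyaux]

lemma countable_closure_set {G : Type*} [AddGroup G] {s : Set G} (hs : s.Countable) :
    ((AddSubgroup.closure s : AddSubgroup G) : Set G).Countable := by
  haveI := hs.to_subtype
  haveI : DecidableEq ↥s := Classical.decEq _
  haveI : Countable (FreeAddGroup s) := FreeAddGroup.toWord_injective.countable
  have h1 : AddSubgroup.closure s = AddSubgroup.closure (Set.range (Subtype.val : s → G)) := by
    rw [Subtype.range_coe]
  rw [h1, ← FreeAddGroup.range_lift_eq_closure]
  exact (Set.countable_range ⇑(FreeAddGroup.lift (Subtype.val : s → G)))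

theorem stmt10 (ι : Type*) [Infinite ι] :
    ∃ H : AddSubgroup (AddAut (ι → AddCircle (1 : ℝ))),
      (H : Set (AddAut (ι → AddCircle (1 : ℝ)))).Countable ∧
      (∀ h ∈ H, Continuous ⇑h ∧ Continuous ⇑h.symm) ∧
      ∀ U ∈ nhds (0 : ι → AddCircle (1 : ℝ)), (⋃ h ∈ H, ⇑h '' U) = Set.univ := by
  classical
  haveI : Fact ((0:ℝ) < 1) := ⟨one_pos⟩
  obtain ⟨e⟩ : Nonempty (ι ≃ ι × ℕ) := by
    rw [← Cardinal.eq]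
    simp [Cardinal.mk_prod, Cardinal.mul_mk_eq_max]
  set S : Set (AddAut (ι → TT)) :=
    (Set.range fun ks : ℕ × ℕ => permAut (pperm e ks.1 ks.2)) ∪
    (Set.range fun ks : ℕ × ℕ => shearAut (shp e ks.1 ks.2) (shp_nil e ks.1 ks.2)) with hS
  refine ⟨AddSubgroup.closure S, countable_closure_set (.union (Set.countable_range _) (Set.countable_range _)), ?_, ?_⟩
  · intro h hh
    refine AddSubgroup.closure_induction
      (p := fun (g : AddAut (ι → TT)) _ => Continuous ⇑g ∧ Continuous ⇑g.symm) ?_ ?_ ?_ ?_ hh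
    · rintro x (⟨⟨K, s⟩, rfl⟩ | ⟨⟨K, s⟩, rfl⟩)
      · exact ⟨permAut_cont _, permAut_symm_cont _⟩
      · exact ⟨shearAut_cont _ _, shearAut_symm_cont _ _⟩
    · exact ⟨continuous_id, continuous_id⟩
    · intro x y hx hy hcx hcy
      exact ⟨hcx.1.comp hcy.1, hcy.2.comp hcx.2⟩
    · intro x hx hcx
      exact ⟨hcx.2, hcx.1⟩
  · intro U hU
    rw [Set.eq_univ_iff_forall]
    intro z
    rw [nhds_pi, Filter.mem_pi] at hU
    obtain ⟨I, hIfin, t, ht, htU⟩ := hU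
    rw [Set.mem_iUnion₂]
    rcases Set.eq_empty_or_nonempty I with hI | hI
    · refine ⟨0, AddSubgroup.zero_mem _, z, htU ?_, rfl⟩
      subst hI
      simp [Set.empty_pi]
    · -- choose radii
      choose δ hδpos hδ using fun i => Metric.mem_nhds_iff.mp (ht i)
      haveI := hIfin.fintype
      set J : Finset ι := hIfin.toFinset with hJ
      have hJne : J.Nonempty := by
        rwa [hJ, Set.Finite.toFinset_nonempty]
      set ε : ℝ := J.inf' hJne δ with hε
      have hεpos : 0 < ε := by
        rw [hε, Finset.lt_inf'_iff]
        intro b _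
        exact hδpos b
      set K : ℕ := (J.sup fun i => (e i).2) + 1 with hK
      have hKlt : ∀ i ∈ I, (e i).2 < K := by
        intro i hi
        have hmem : i ∈ J := by rw [hJ, Set.Finite.mem_toFinset]; exact hi
        have h2 : (e i).2 ≤ J.sup fun j => (e j).2 :=
          Finset.le_sup (f := fun j => (e j).2) hmem
        omega
      -- the pigeonhole sequence
      set u : ℕ → (↥I → TT) := fun s i => z (e.symm ((e i.1).1, K + Nat.pair (e i.1).2 s)) with hu
      obtain ⟨a, -, φ, hφ, hconv⟩ :=
        IsCompact.tendsto_subseq (isCompact_univ (X := ↥I → TT)) (fun n => Set.mem_univ (u n))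
      rw [Metric.tendsto_atTop] at hconv
      obtain ⟨N, hN⟩ := hconv (ε / 2) (by positivity)
      set s1 : ℕ := φ N with hs1
      set s2 : ℕ := φ (N + 1) with hs2
      have hss : s1 ≠ s2 := ne_of_lt (hφ (by omega))
      have hd : dist (u s1) (u s2) < ε := by
        calc dist (u s1) (u s2) ≤ dist (u s1) a + dist (u s2) a := dist_triangle_right _ _ _
        _ < ε / 2 + ε / 2 := by
            have h1 := hN N le_rfl
            have h2 := hN (N + 1) (by omega)
            simp only [Function.comp_apply] at h1 h2
            exact add_lt_add h1 h2
        _ = ε := by ring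
      set g : AddAut (ι → TT) :=
        shearAut (shp e K s2) (shp_nil e K s2) + permAut (pperm e K s1) with hg
      have hgmem : g ∈ AddSubgroup.closure S := by
        refine AddSubgroup.add_mem _ (AddSubgroup.subset_closure ?_) (AddSubgroup.subset_closure ?_)
        · exact Or.inr ⟨(K, s2), rfl⟩
        · exact Or.inl ⟨(K, s1), rfl⟩
      refine ⟨-g, AddSubgroup.neg_mem _ hgmem, g z, htU ?_, ?_⟩
      · rw [Set.mem_pi]
        intro i hi
        have hcomp := key_comp e K s1 s2 hss z i (hKlt i hi)
        rw [← hg] at hcomp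
        have hdist : dist (u s1 ⟨i, hi⟩) (u s2 ⟨i, hi⟩) < ε :=
          lt_of_le_of_lt (dist_le_pi_dist (u s1) (u s2) ⟨i, hi⟩) hd
        have hball : g z i ∈ Metric.ball (0 : TT) (δ i) := by
          rw [Metric.mem_ball, dist_zero_right, hcomp]
          have : z (e.symm ((e i).1, K + Nat.pair (e i).2 s1))
              - z (e.symm ((e i).1, K + Nat.pair (e i).2 s2))
              = u s1 ⟨i, hi⟩ - u s2 ⟨i, hi⟩ := rfl
          rw [this, ← dist_eq_norm]
          refine lt_of_lt_of_le hdist ?_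
          rw [hε]
          exact Finset.inf'_le δ (by rwa [hJ, Set.Finite.mem_toFinset])
        exact hδ i hball
      · show (-g) (g z) = z
        simp
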